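/- If A is a totally unimodular matrix and b is an integral vector, then every extreme point of the polyhedron {x : Ax ≤ b, x ≥ 0} is integral. -/

import Mathlib

open Matrix Finset

lemma tu_aux_key {m n : Type*} [Fintype m] [Fintype n]
    (A : Matrix m n ℝ) (b : m → ℝ) (z : n → ℝ)
    (hz : z ∈ ({x : n → ℝ | (∀ i, A.mulVec x i ≤ b i) ∧ ∀ j, 0 ≤ x j}).extremePoints ℝ)
    (d : n → ℝ) (hd1 : ∀ i, A.mulVec z i = b i → A.mulVec d i = 0)
    (hd2 : ∀ j, z j = 0 → d j = 0) : d = 0 := by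
  classical
  by_contra hdne
  obtain ⟨j₀, hj₀⟩ : ∃ j, d j ≠ 0 := by
    by_contra h
    push_neg at h
    exact hdne (funext h)
  obtain ⟨⟨hzb, hz0⟩, hzext⟩ := hz
  set f : m ⊕ n → ℝ := Sum.elim
    (fun i => if A.mulVec z i = b i then 1 else (b i - A.mulVec z i) / (|A.mulVec d i| + 1))
    (fun j => if z j = 0 then 1 else z j / (|d j| + 1)) with hf
  have hfpos : ∀ r, 0 < f r := by
    rintro (i | j)
    · simp only [hf, Sum.elim_inl]
      split_ifs with h
      · norm_num
      · exact div_pos (sub_pos.mpr (lt_of_le_of_ne (hzb i) h))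
          (by positivity)
    · simp only [hf, Sum.elim_inr]
      split_ifs with h
      · norm_num
      · exact div_pos (lt_of_le_of_ne (hz0 j) (Ne.symm h)) (by positivity)
  have hne : (Finset.univ : Finset (m ⊕ n)).Nonempty := ⟨Sum.inr j₀, Finset.mem_univ _⟩
  set ε : ℝ := Finset.univ.inf' hne f with hεdef
  have hε : 0 < ε := (Finset.lt_inf'_iff hne).mpr (fun r _ => hfpos r)
  have hεle : ∀ r, ε ≤ f r := fun r => Finset.inf'_le _ (Finset.mem_univ r)
  have hmem : ∀ t : ℝ, |t| ≤ ε →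
      (z + t • d) ∈ {x : n → ℝ | (∀ i, A.mulVec x i ≤ b i) ∧ ∀ j, 0 ≤ x j} := by
    intro t ht
    constructor
    · intro i
      have hAv : A.mulVec (z + t • d) i = A.mulVec z i + t * A.mulVec d i := by
        rw [Matrix.mulVec_add, Matrix.mulVec_smul]
        simp
      rw [hAv]
      by_cases hi : A.mulVec z i = b i
      · rw [hd1 i hi, hi]; ring_nf; exact le_refl _
      · have hslack : ε * (|A.mulVec d i| + 1) ≤ b i - A.mulVec z i := by
          have := hεle (Sum.inl i)
          simp only [hf, Sum.elim_inl, if_neg hi] at this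
          exact (le_div_iff₀ (by positivity)).mp this
        have h1 : t * A.mulVec d i ≤ |t| * |A.mulVec d i| := by
          calc t * A.mulVec d i ≤ |t * A.mulVec d i| := le_abs_self _
          _ = |t| * |A.mulVec d i| := abs_mul _ _
        have h2 : |t| * |A.mulVec d i| ≤ ε * (|A.mulVec d i| + 1) := by
          have h3 : |t| * |A.mulVec d i| ≤ ε * |A.mulVec d i| :=
            mul_le_mul_of_nonneg_right ht (abs_nonneg _)
          nlinarith [abs_nonneg (A.mulVec d i)]
        linarith
    · intro j
      by_cases hj : z j = 0
      · simp [hd2 j hj, hj]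
      · have hzj : 0 < z j := lt_of_le_of_ne (hz0 j) (Ne.symm hj)
        have hslack : ε * (|d j| + 1) ≤ z j := by
          have := hεle (Sum.inr j)
          simp only [hf, Sum.elim_inr, if_neg hj] at this
          exact (le_div_iff₀ (by positivity)).mp this
        have h1 : -(t * d j) ≤ |t| * |d j| := by
          calc -(t * d j) ≤ |t * d j| := neg_le_abs _
          _ = |t| * |d j| := abs_mul _ _
        have h2 : |t| * |d j| ≤ ε * (|d j| + 1) := by
          have h3 : |t| * |d j| ≤ ε * |d j| :=
            mul_le_mul_of_nonneg_right ht (abs_nonneg _)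
          nlinarith [abs_nonneg (d j)]
        have : 0 ≤ z j + t * d j := by linarith
        simpa using this
  have hm1 := hmem ε (by rw [abs_of_pos hε])
  have hm2 := hmem (-ε) (by rw [abs_neg, abs_of_pos hε])
  have hseg : z ∈ openSegment ℝ (z + ε • d) (z + (-ε) • d) := by
    refine ⟨1/2, 1/2, by norm_num, by norm_num, by norm_num, ?_⟩
    module
  have := hzext hm1 hm2 hseg
  have hεd : ε • d = 0 := by
    have h' : z + ε • d = z := this
    have := congrArg (· - z) h'
    simpa using this
  have : d = 0 := by
    have := smul_eq_zero.mp hεd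
    rcases this with h | h
    · exact absurd h (ne_of_gt hε)
    · exact h
  exact hdne this

/-- if `A` is totally unimodular and `b` is integral, then every extreme point
of the polyhedron `{x : A x ≤ b, x ≥ 0}` is integral. -/
theorem tu_extreme_points_integral {m n : Type*} [Fintype m] [Fintype n]
    (A : Matrix m n ℝ) (hA : A.IsTotallyUnimodular)
    (b : m → ℝ) (hb : ∀ i, ∃ k : ℤ, b i = (k : ℝ))
    (z : n → ℝ)
    (hz : z ∈ ({x : n → ℝ | (∀ i, A.mulVec x i ≤ b i) ∧ ∀ j, 0 ≤ x j}).extremePoints ℝ) :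
    ∀ j, ∃ k : ℤ, z j = (k : ℝ) := by
  have key : ∀ d : n → ℝ, (∀ i, A.mulVec z i = b i → A.mulVec d i = 0) →
      (∀ j, z j = 0 → d j = 0) → d = 0 := tu_aux_key A b z hz
  classical
  set C : Matrix (m ⊕ n) n ℝ := Matrix.fromRows A 1 with hC
  set S : Set (m ⊕ n) := {r | Sum.elim (fun i => A.mulVec z i = b i) (fun j => z j = 0) r}
    with hS
  set D : Matrix S n ℝ := C.submatrix Subtype.val id with hD
  -- rows of C evaluated
  have hCmul : ∀ x : n → ℝ, C.mulVec x = Sum.elim (A.mulVec x) x := by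
    intro x
    rw [hC, Matrix.fromRows_mulVec, Matrix.one_mulVec]
  -- injectivity of D.mulVec
  have hDinj : Function.Injective D.mulVec := by
    intro x y hxy
    have hsub : D.mulVec (x - y) = 0 := by
      rw [Matrix.mulVec_sub, hxy, sub_self]
    have hxy0 : x - y = 0 := by
      apply key
      · intro i hi
        have := congrFun hsub ⟨Sum.inl i, by simpa [hS] using hi⟩
        simpa [hD, Matrix.mulVec, Matrix.submatrix, hC, Matrix.fromRows_apply_inl] using this
      · intro j hj
        have := congrFun hsub ⟨Sum.inr j, by simpa [hS] using hj⟩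
        simpa [hD, Matrix.mulVec, hC, Matrix.fromRows_apply_inr, Matrix.one_apply, dotProduct]
          using this
    have := sub_eq_zero.mp hxy0
    exact this
  -- rank of D
  have hcols : LinearIndependent ℝ (fun j => Dᵀ j) := Matrix.mulVec_injective_iff.mp hDinj
  have hrank : D.rank = Fintype.card n := by
    rw [Matrix.rank_eq_finrank_span_cols]; exact finrank_span_eq_card hcols
  have hrowspan : Submodule.span ℝ (Set.range D) = ⊤ := by
    apply Submodule.eq_top_of_finrank_eq
    rw [show Set.range D = Set.range D.row from rfl, ← Matrix.rank_eq_finrank_span_row, hrank, Module.finrank_pi]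
  -- extract a basis from rows
  obtain ⟨bs, hbsub, hbspan, hbind⟩ := exists_linearIndependent ℝ (Set.range D)
  have hbspan' : ⊤ ≤ Submodule.span ℝ (Set.range ((↑) : bs → (n → ℝ))) := by
    rw [Subtype.range_coe, hbspan, hrowspan]
  let bas : Module.Basis bs ℝ (n → ℝ) := Module.Basis.mk hbind hbspan'
  have : Finite bs := (Set.finite_range D).subset hbsub
  have : Fintype bs := Fintype.ofFinite _
  have hcard : Fintype.card bs = Fintype.card n := by
    have := Module.finrank_eq_card_basis bas
    rw [Module.finrank_pi] at this
    omega
  let e : n ≃ bs := (Fintype.equivOfCardEq hcard).symm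
  -- choose row indices
  have hpre : ∀ x : bs, ∃ r : S, D r = (x : n → ℝ) := fun x => hbsub x.2
  let g : n → S := fun j => Classical.choose (hpre (e j))
  have hg : ∀ j, D (g j) = ((e j : bs) : n → ℝ) := fun j => Classical.choose_spec (hpre (e j))
  let ρ : n → m ⊕ n := fun j => (g j : m ⊕ n)
  set B : Matrix n n ℝ := C.submatrix ρ id with hB
  have hBrows : ∀ j, B j = ((e j : bs) : n → ℝ) := by
    intro j
    ext k
    have := congrFun (hg j) k
    simpa [hB, hD, ρ] using this
  -- B is invertible
  have hBindep : LinearIndependent ℝ (fun j => B j) := by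
    have : (fun j => B j) = (fun x : bs => (x : n → ℝ)) ∘ e := by
      funext j; rw [hBrows j]; rfl
    rw [this]
    exact hbind.comp e (Equiv.injective e)
  have hBunit : IsUnit B := Matrix.linearIndependent_rows_iff_isUnit.mp hBindep
  have hBdet : IsUnit B.det := (Matrix.isUnit_iff_isUnit_det B).mp hBunit
  have hBdetne : B.det ≠ 0 := hBdet.ne_zero
  -- B is TU
  have hBTU : B.IsTotallyUnimodular := (((Matrix.fromRows_one_isTotallyUnimodular_iff A).mpr hA).submatrix ρ id)
  have hBdetsign : B.det ∈ Set.range SignType.cast := by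
    have := (Matrix.isTotallyUnimodular_iff_fintype B).mp hBTU n id id
    simpa using this
  have hdet1 : B.det = 1 ∨ B.det = -1 := by
    obtain ⟨s, hs⟩ := hBdetsign
    cases s with
    | zero => exact absurd hs.symm (by simpa using hBdetne)
    | pos => left; exact hs.symm
    | neg => right; exact hs.symm
  -- the right-hand side vector
  set c : n → ℝ := fun j => Sum.elim b (fun _ => 0) (ρ j) with hc
  have hBz : B.mulVec z = c := by
    funext j
    have h1 : B.mulVec z j = C.mulVec z (ρ j) := by
      simp [hB, Matrix.mulVec, Matrix.submatrix]
    rw [h1, hCmul z, hc]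
    have hmemS : (ρ j) ∈ S := (g j).2
    rcases hr : ρ j with i | k
    · rw [hr] at hmemS
      simpa [hS, hr] using hmemS
    · rw [hr] at hmemS
      simpa [hS, hr] using hmemS
  -- integer versions
  have hBint : ∀ i j, ∃ k : ℤ, B i j = (k : ℝ) := by
    intro i j
    obtain ⟨s, hs⟩ := hBTU.apply i j
    exact ⟨(s : ℤ), by rw [← hs]; cases s <;> simp⟩
  set B₀ : Matrix n n ℤ := fun i j => Classical.choose (hBint i j) with hB₀
  have hBmap : B = B₀.map (Int.cast : ℤ → ℝ) := by
    ext i j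
    exact Classical.choose_spec (hBint i j)
  set c₀ : n → ℤ := fun j =>
    Sum.elim (fun i => Classical.choose (hb i)) (fun _ => 0) (ρ j) with hc₀
  have hcmap : ∀ j, c j = ((c₀ j : ℤ) : ℝ) := by
    intro j
    simp only [hc, hc₀]
    rcases hr : ρ j with i | k
    · simpa using Classical.choose_spec (hb i)
    · simp
  -- Cramer
  have hfinal : B.det • z = (B.adjugate).mulVec c := by
    rw [← hBz, Matrix.mulVec_mulVec, Matrix.adjugate_mul, Matrix.smul_mulVec,
      Matrix.one_mulVec]
  have hadjint : ∀ j, ∃ k : ℤ, (B.adjugate).mulVec c j = (k : ℝ) := by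
    intro j
    refine ⟨(B₀.adjugate).mulVec c₀ j, ?_⟩
    have hadj : B.adjugate = (B₀.adjugate).map (Int.cast : ℤ → ℝ) := by
      rw [hBmap]
      have := RingHom.map_adjugate (Int.castRingHom ℝ) B₀
      simpa [RingHom.mapMatrix_apply] using this.symm
    rw [hadj]
    simp only [Matrix.mulVec, dotProduct, Matrix.map_apply]
    push_cast
    refine Finset.sum_congr rfl fun k _ => ?_
    rw [hcmap k]
  intro j
  obtain ⟨k, hk⟩ := hadjint j
  have hj := congrFun hfinal j
  simp only [Pi.smul_apply, smul_eq_mul] at hj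
  rcases hdet1 with h | h
  · exact ⟨k, by rw [h] at hj; simpa using hj.trans hk⟩
  · refine ⟨-k, ?_⟩
    rw [h] at hj
    push_cast
    linarith [hj.trans hk]
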